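/- Fix d ≥ 2 and p = (p₁,…,p_d) ∈ (0,1)^d. Let I and I' be {0,1}^d-valued random vectors, both with P(I_m = 1) = P(I'_m = 1) = p_m for each m, and suppose that E[φ(I)] ≤ E[φ(I')] for every bounded measurable supermodular function φ: ℝ^d → ℝ. Construct U from I and U' from I' via the GFGM representation U_m = U₀,ₘ^{1-p_m}·U₁,ₘ^{I_m} (respectively with I'), where U₀, U₁ are vectors of i.i.d. standard uniform random variables on [0,1] independent of the Bernoulli vector. Then E[φ(U)] ≤ E[φ(U')] for every bounded measurable supermodular function φ: ℝ^d → ℝ. -/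

import Mathlib

open MeasureTheory ProbabilityTheory Set

/-- The real value (`0` or `1`) of a Bernoulli outcome. -/
noncomputable def bval (b : Bool) : ℝ := if b then 1 else 0

/-- The joint law of an i.i.d.-style independent family of real random variables is
the product of the marginal laws. -/
lemma aux_map_fun_eq_pi {ι Ω : Type*} [Fintype ι] [MeasurableSpace Ω] (P : Measure Ω)
    [IsProbabilityMeasure P] (f : ι → Ω → ℝ) (hf : ∀ i, Measurable (f i))
    (h : iIndepFun (m := fun _ : ι => (inferInstance : MeasurableSpace ℝ)) f P) :
    P.map (fun ω i => f i ω) = Measure.pi (fun i => P.map (f i)) := by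
  haveI hinst : ∀ i, IsProbabilityMeasure (P.map (f i)) :=
    fun i => Measure.isProbabilityMeasure_map (hf i).aemeasurable
  refine (Measure.pi_eq (μ := fun i => P.map (f i)) fun s hs => ?_).symm
  rw [Measure.map_apply (measurable_pi_lambda _ hf) (MeasurableSet.univ_pi hs)]
  have hpre : (fun ω i => f i ω) ⁻¹' (Set.pi Set.univ s) = ⋂ i ∈ Finset.univ, f i ⁻¹' s i := by
    ext ω; simp [Set.mem_pi]
  rw [hpre, h.measure_inter_preimage_eq_mul Finset.univ (fun i _ => hs i)]
  exact Finset.prod_congr rfl fun i _ => (Measure.map_apply (hf i) (hs i)).symm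

/-- Composition of a supermodular function with componentwise antitone maps is supermodular. -/
lemma aux_supermodular_comp {d : ℕ} (φ : (Fin d → ℝ) → ℝ)
    (hφ : ∀ x y, φ x + φ y ≤ φ (x ⊔ y) + φ (x ⊓ y))
    (F : Fin d → ℝ → ℝ) (hF : ∀ m, Antitone (F m)) :
    ∀ x y : Fin d → ℝ, φ (fun m => F m (x m)) + φ (fun m => F m (y m)) ≤
      φ (fun m => F m ((x ⊔ y) m)) + φ (fun m => F m ((x ⊓ y) m)) := by
  intro x y
  set A : Fin d → ℝ := fun m => F m (x m)
  set B : Fin d → ℝ := fun m => F m (y m)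
  have h1 : (fun m => F m ((x ⊔ y) m)) = A ⊓ B := by
    funext m
    simp only [Pi.sup_apply, Pi.inf_apply]
    exact (hF m).map_max
  have h2 : (fun m => F m ((x ⊓ y) m)) = A ⊔ B := by
    funext m
    simp only [Pi.sup_apply, Pi.inf_apply]
    exact (hF m).map_min
  rw [h1, h2, add_comm (φ (A ⊓ B))]
  exact hφ A B

/-- Supermodular ordering of the underlying Bernoulli vectors implies supermodular ordering
of the GFGM-representation vectors `U_m = U₀ₘ^(1-p_m) * U₁ₘ^(I_m)`. -/
theorem gfgm_supermodular_order
    {Ω : Type*} [MeasurableSpace Ω] (P : Measure Ω) [IsProbabilityMeasure P]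
    {Ω' : Type*} [MeasurableSpace Ω'] (P' : Measure Ω') [IsProbabilityMeasure P']
    (d : ℕ) (hd : 2 ≤ d) (p : Fin d → ℝ) (hp : ∀ m, p m ∈ Ioo (0 : ℝ) 1)
    (I : Ω → Fin d → Bool) (U₀ U₁ : Fin d → Ω → ℝ)
    (I' : Ω' → Fin d → Bool) (U₀' U₁' : Fin d → Ω' → ℝ)
    (hI : Measurable I) (hU₀ : ∀ m, Measurable (U₀ m)) (hU₁ : ∀ m, Measurable (U₁ m))
    (hI' : Measurable I') (hU₀' : ∀ m, Measurable (U₀' m)) (hU₁' : ∀ m, Measurable (U₁' m))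
    (hU₀law : ∀ m, P.map (U₀ m) = volume.restrict (Icc (0 : ℝ) 1))
    (hU₁law : ∀ m, P.map (U₁ m) = volume.restrict (Icc (0 : ℝ) 1))
    (hU₀law' : ∀ m, P'.map (U₀' m) = volume.restrict (Icc (0 : ℝ) 1))
    (hU₁law' : ∀ m, P'.map (U₁' m) = volume.restrict (Icc (0 : ℝ) 1))
    (hImarg : ∀ m, P {ω | I ω m = true} = ENNReal.ofReal (p m))
    (hImarg' : ∀ m, P' {ω | I' ω m = true} = ENNReal.ofReal (p m))
    (hiid : iIndepFun (m := fun _ : Fin d ⊕ Fin d => (inferInstance : MeasurableSpace ℝ))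
      (Sum.elim U₀ U₁) P)
    (hIU : IndepFun I (fun ω j => Sum.elim U₀ U₁ j ω) P)
    (hiid' : iIndepFun (m := fun _ : Fin d ⊕ Fin d => (inferInstance : MeasurableSpace ℝ))
      (Sum.elim U₀' U₁') P')
    (hIU' : IndepFun I' (fun ω j => Sum.elim U₀' U₁' j ω) P')
    (hsm : ∀ φ : (Fin d → ℝ) → ℝ, Measurable φ → (∃ c : ℝ, ∀ x, |φ x| ≤ c) →
      (∀ x y, φ x + φ y ≤ φ (x ⊔ y) + φ (x ⊓ y)) →
      ∫ ω, φ (fun m => bval (I ω m)) ∂P ≤ ∫ ω, φ (fun m => bval (I' ω m)) ∂P') :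
    ∀ φ : (Fin d → ℝ) → ℝ, Measurable φ → (∃ c : ℝ, ∀ x, |φ x| ≤ c) →
      (∀ x y, φ x + φ y ≤ φ (x ⊔ y) + φ (x ⊓ y)) →
      ∫ ω, φ (fun m => U₀ m ω ^ (1 - p m) * U₁ m ω ^ bval (I ω m)) ∂P
        ≤ ∫ ω, φ (fun m => U₀' m ω ^ (1 - p m) * U₁' m ω ^ bval (I' ω m)) ∂P' := by
  intro φ hφm hφb hφsm
  obtain ⟨c, hc⟩ := hφb
  set μ1 : Measure ℝ := volume.restrict (Icc (0 : ℝ) 1) with hμ1def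
  haveI hμ1 : IsProbabilityMeasure μ1 := by
    constructor
    rw [hμ1def, Measure.restrict_apply_univ, Real.volume_Icc]
    norm_num
  set π : Measure (Fin d ⊕ Fin d → ℝ) := Measure.pi (fun _ => μ1) with hπdef
  -- measurability of component maps
  have hf : ∀ j : Fin d ⊕ Fin d, Measurable (Sum.elim U₀ U₁ j) := by
    rintro (m | m)
    · exact hU₀ m
    · exact hU₁ m
  have hf' : ∀ j : Fin d ⊕ Fin d, Measurable (Sum.elim U₀' U₁' j) := by
    rintro (m | m)
    · exact hU₀' m
    · exact hU₁' m
  set V : Ω → (Fin d ⊕ Fin d) → ℝ := fun ω j => Sum.elim U₀ U₁ j ω with hVdef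
  set V' : Ω' → (Fin d ⊕ Fin d) → ℝ := fun ω j => Sum.elim U₀' U₁' j ω with hV'def
  have hVm : Measurable V := measurable_pi_lambda _ hf
  have hV'm : Measurable V' := measurable_pi_lambda _ hf'
  -- the law of V is the product of uniforms
  have hVlaw : P.map V = π := by
    rw [hVdef, aux_map_fun_eq_pi P _ hf hiid, hπdef]
    congr 1
    funext j
    rcases j with m | m
    · exact hU₀law m
    · exact hU₁law m
  have hV'law : P'.map V' = π := by
    rw [hV'def, aux_map_fun_eq_pi P' _ hf' hiid', hπdef]
    congr 1
    funext j
    rcases j with m | m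
    · exact hU₀law' m
    · exact hU₁law' m
  -- joint laws
  have hjoint : P.map (fun ω => (I ω, V ω)) = (P.map I).prod π := by
    rw [← hVlaw]
    exact (indepFun_iff_map_prod_eq_prod_map_map hI.aemeasurable hVm.aemeasurable).mp hIU
  have hjoint' : P'.map (fun ω => (I' ω, V' ω)) = (P'.map I').prod π := by
    rw [← hV'law]
    exact (indepFun_iff_map_prod_eq_prod_map_map hI'.aemeasurable hV'm.aemeasurable).mp hIU'
  -- the GFGM transform
  set g : (Fin d → Bool) × ((Fin d ⊕ Fin d) → ℝ) → Fin d → ℝ :=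
    fun q m => q.2 (Sum.inl m) ^ (1 - p m) * q.2 (Sum.inr m) ^ bval (q.1 m) with hgdef
  have hbval : Measurable bval := Measurable.of_discrete
  have hgm : Measurable g := by
    apply measurable_pi_lambda
    intro m
    exact Measurable.mul
      (Measurable.pow ((measurable_pi_apply (Sum.inl m)).comp measurable_snd) measurable_const)
      (Measurable.pow ((measurable_pi_apply (Sum.inr m)).comp measurable_snd)
        (hbval.comp ((measurable_pi_apply m).comp measurable_fst)))
  haveI : IsProbabilityMeasure (P.map I) := Measure.isProbabilityMeasure_map hI.aemeasurable
  haveI : IsProbabilityMeasure (P'.map I') := Measure.isProbabilityMeasure_map hI'.aemeasurable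
  haveI : IsProbabilityMeasure π := by
    rw [hπdef]; infer_instance
  -- integrability of φ ∘ g on the product measures
  have hint : Integrable (fun q => φ (g q)) ((P.map I).prod π) := by
    refine (integrable_const c).mono' ((hφm.comp hgm).aestronglyMeasurable)
      (ae_of_all _ fun q => ?_)
    simpa [Real.norm_eq_abs] using hc (g q)
  have hint' : Integrable (fun q => φ (g q)) ((P'.map I').prod π) := by
    refine (integrable_const c).mono' ((hφm.comp hgm).aestronglyMeasurable)
      (ae_of_all _ fun q => ?_)
    simpa [Real.norm_eq_abs] using hc (g q)
  -- rewrite both sides as iterated integrals over π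
  have hL : ∫ ω, φ (fun m => U₀ m ω ^ (1 - p m) * U₁ m ω ^ bval (I ω m)) ∂P
      = ∫ v, ∫ i, φ (g (i, v)) ∂(P.map I) ∂π := by
    calc ∫ ω, φ (fun m => U₀ m ω ^ (1 - p m) * U₁ m ω ^ bval (I ω m)) ∂P
        = ∫ q, φ (g q) ∂(P.map (fun ω => (I ω, V ω))) :=
          (integral_map (hI.prodMk hVm).aemeasurable
            ((hφm.comp hgm).aestronglyMeasurable)).symm
      _ = ∫ q, φ (g q) ∂((P.map I).prod π) := by rw [hjoint]
      _ = ∫ v, ∫ i, φ (g (i, v)) ∂(P.map I) ∂π := integral_prod_symm _ hint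
  have hR : ∫ ω, φ (fun m => U₀' m ω ^ (1 - p m) * U₁' m ω ^ bval (I' ω m)) ∂P'
      = ∫ v, ∫ i, φ (g (i, v)) ∂(P'.map I') ∂π := by
    calc ∫ ω, φ (fun m => U₀' m ω ^ (1 - p m) * U₁' m ω ^ bval (I' ω m)) ∂P'
        = ∫ q, φ (g q) ∂(P'.map (fun ω => (I' ω, V' ω))) :=
          (integral_map (hI'.prodMk hV'm).aemeasurable
            ((hφm.comp hgm).aestronglyMeasurable)).symm
      _ = ∫ q, φ (g q) ∂((P'.map I').prod π) := by rw [hjoint']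
      _ = ∫ v, ∫ i, φ (g (i, v)) ∂(P'.map I') ∂π := integral_prod_symm _ hint'
  rw [hL, hR]
  -- almost every v is "good": all coordinates in (0,1]
  have hnull : μ1 {x : ℝ | ¬ x ∈ Ioc (0 : ℝ) 1} = 0 := by
    rw [hμ1def, Measure.restrict_apply' measurableSet_Icc]
    refine measure_mono_null (t := {(0 : ℝ)}) ?_ Real.volume_singleton
    rintro x ⟨hx1, hx2⟩
    simp only [mem_setOf_eq, mem_Ioc, not_and_or, not_lt, not_le] at hx1
    simp only [mem_Icc] at hx2
    have hx0 : x = 0 := by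
      rcases hx1 with h | h
      · exact le_antisymm h hx2.1
      · exact absurd hx2.2 (not_le.mpr h)
    simp [hx0]
  have haeπ : ∀ᵐ v ∂π, ∀ j, v j ∈ Ioc (0 : ℝ) 1 := by
    rw [ae_all_iff]
    intro j
    rw [ae_iff]
    exact Measure.pi_eval_preimage_null (fun _ : Fin d ⊕ Fin d => μ1) (i := j) hnull
  -- pointwise (in v) comparison of inner integrals
  refine integral_mono_ae hint.integral_prod_right hint'.integral_prod_right ?_
  filter_upwards [haeπ] with v hv
  -- for a good v, x ↦ φ (g (x, v)) composed with bval is handled by hsm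
  set ψ : (Fin d → ℝ) → ℝ :=
    fun x => φ (fun m => v (Sum.inl m) ^ (1 - p m) * v (Sum.inr m) ^ x m) with hψdef
  have hψm : Measurable ψ := by
    apply hφm.comp
    apply measurable_pi_lambda
    intro m
    exact (Measurable.pow measurable_const measurable_const).mul
      (Measurable.pow measurable_const (measurable_pi_apply m))
  have hψb : ∃ c : ℝ, ∀ x, |ψ x| ≤ c := ⟨c, fun x => hc _⟩
  have hψsm : ∀ x y, ψ x + ψ y ≤ ψ (x ⊔ y) + ψ (x ⊓ y) := by
    have hF : ∀ m, Antitone (fun t : ℝ => v (Sum.inl m) ^ (1 - p m) * v (Sum.inr m) ^ t) := by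
      intro m t s hts
      have h1 : (0 : ℝ) ≤ v (Sum.inl m) ^ (1 - p m) :=
        Real.rpow_nonneg (le_of_lt (hv (Sum.inl m)).1) _
      show v (Sum.inl m) ^ (1 - p m) * v (Sum.inr m) ^ s
          ≤ v (Sum.inl m) ^ (1 - p m) * v (Sum.inr m) ^ t
      exact mul_le_mul_of_nonneg_left
        (Real.rpow_le_rpow_of_exponent_ge (hv (Sum.inr m)).1 (hv (Sum.inr m)).2 hts) h1
    exact aux_supermodular_comp φ hφsm
      (fun m (t : ℝ) => v (Sum.inl m) ^ (1 - p m) * v (Sum.inr m) ^ t) hF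
  have key := hsm ψ hψm hψb hψsm
  have e1 : ∫ i, φ (g (i, v)) ∂(P.map I) = ∫ ω, ψ (fun m => bval (I ω m)) ∂P :=
    integral_map hI.aemeasurable
      (hφm.comp (hgm.comp (measurable_id.prodMk measurable_const))).aestronglyMeasurable
  have e2 : ∫ i, φ (g (i, v)) ∂(P'.map I') = ∫ ω, ψ (fun m => bval (I' ω m)) ∂P' :=
    integral_map hI'.aemeasurable
      (hφm.comp (hgm.comp (measurable_id.prodMk measurable_const))).aestronglyMeasurable
  rw [e1, e2]
  exact key
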